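/- Let f and g be complex affine functions on ℂ² with ∥∇f∥ = ∥∇g∥ = 1, and suppose the sets {f=0} ∩ ∂𝔹² and {g=0} ∩ ∂𝔹² are disjoint. Then there exist positive numbers a and r' < 1 such that for every ε > 0, every point z with r' ≤ ∥z∥ ≤ 1 and |f(z)·g(z)| ≤ aε satisfies |f(z)| ≤ ε or |g(z)| ≤ ε. -/

import Mathlib

lemma lip_aux (f₁ f₂ : ℂ) (hf : ‖f₁‖ ^ 2 + ‖f₂‖ ^ 2 = 1) (z w : EuclideanSpace ℂ (Fin 2)) :
    ‖f₁ * (z 0 - w 0) + f₂ * (z 1 - w 1)‖ ≤ ‖z - w‖ := by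
  have hnorm : ‖z - w‖ = Real.sqrt (‖z 0 - w 0‖^2 + ‖z 1 - w 1‖^2) := by
    rw [EuclideanSpace.norm_eq]
    simp [Fin.sum_univ_two]
  rw [hnorm]
  have h1 : ‖f₁ * (z 0 - w 0) + f₂ * (z 1 - w 1)‖ ≤ ‖f₁‖ * ‖z 0 - w 0‖ + ‖f₂‖ * ‖z 1 - w 1‖ := by
    refine (norm_add_le _ _).trans ?_
    simp [norm_mul]
  refine h1.trans ?_
  rw [Real.le_sqrt (by positivity)]
  · nlinarith [sq_nonneg (‖f₁‖ * ‖z 1 - w 1‖ - ‖f₂‖ * ‖z 0 - w 0‖), norm_nonneg (z 0 - w 0),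
      norm_nonneg (z 1 - w 1), norm_nonneg f₁, norm_nonneg f₂]
  · positivity

lemma lip_aux' (f₀ f₁ f₂ : ℂ) (hf : ‖f₁‖ ^ 2 + ‖f₂‖ ^ 2 = 1) (z w : EuclideanSpace ℂ (Fin 2)) :
    ‖(f₀ + f₁ * z 0 + f₂ * z 1) - (f₀ + f₁ * w 0 + f₂ * w 1)‖ ≤ ‖z - w‖ := by
  have : (f₀ + f₁ * z 0 + f₂ * z 1) - (f₀ + f₁ * w 0 + f₂ * w 1)
      = f₁ * (z 0 - w 0) + f₂ * (z 1 - w 1) := by ring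
  rw [this]
  exact lip_aux f₁ f₂ hf z w

/-- Main lemma: for affine `f, g` with unit gradient whose zero circles on the unit
sphere are disjoint, there are `a > 0` and `r' < 1` with the stated dichotomy. -/
theorem stmt_0 (f₀ f₁ f₂ g₀ g₁ g₂ : ℂ)
    (hf : ‖f₁‖ ^ 2 + ‖f₂‖ ^ 2 = 1) (hg : ‖g₁‖ ^ 2 + ‖g₂‖ ^ 2 = 1)
    (hdisj : Disjoint
      ({z : EuclideanSpace ℂ (Fin 2) | f₀ + f₁ * z 0 + f₂ * z 1 = 0} ∩ Metric.sphere 0 1)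
      ({z : EuclideanSpace ℂ (Fin 2) | g₀ + g₁ * z 0 + g₂ * z 1 = 0} ∩ Metric.sphere 0 1)) :
    ∃ a > (0 : ℝ), ∃ r' > (0 : ℝ), r' < 1 ∧
      ∀ ε > (0 : ℝ), ∀ z : EuclideanSpace ℂ (Fin 2),
        r' ≤ ‖z‖ → ‖z‖ ≤ 1 →
        ‖(f₀ + f₁ * z 0 + f₂ * z 1) * (g₀ + g₁ * z 0 + g₂ * z 1)‖ ≤ a * ε →
        ‖f₀ + f₁ * z 0 + f₂ * z 1‖ ≤ ε ∨ ‖g₀ + g₁ * z 0 + g₂ * z 1‖ ≤ ε := by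
  set F : EuclideanSpace ℂ (Fin 2) → ℂ := fun z => f₀ + f₁ * z 0 + f₂ * z 1 with hF
  set G : EuclideanSpace ℂ (Fin 2) → ℂ := fun z => g₀ + g₁ * z 0 + g₂ * z 1 with hG
  have hcont : Continuous fun z : EuclideanSpace ℂ (Fin 2) => ‖F z‖ + ‖G z‖ := by
    have h0 : Continuous fun z : EuclideanSpace ℂ (Fin 2) => z 0 := (continuous_apply 0).comp (PiLp.continuous_ofLp 2 _)
    have h1 : Continuous fun z : EuclideanSpace ℂ (Fin 2) => z 1 := (continuous_apply 1).comp (PiLp.continuous_ofLp 2 _)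
    fun_prop
  -- minimum on the sphere
  obtain ⟨z₀, hz₀mem, hz₀min⟩ :=
    (isCompact_sphere (0 : EuclideanSpace ℂ (Fin 2)) 1).exists_isMinOn
      (NormedSpace.sphere_nonempty.mpr zero_le_one) hcont.continuousOn
  set c := ‖F z₀‖ + ‖G z₀‖ with hc
  have hcpos : 0 < c := by
    rcases lt_or_eq_of_le (by positivity : (0:ℝ) ≤ c) with h | h
    · exact h
    · exfalso
      have hF0 : F z₀ = 0 := by
        have := norm_nonneg (F z₀); have := norm_nonneg (G z₀)
        have : ‖F z₀‖ = 0 := by linarith [norm_nonneg (G z₀), norm_nonneg (F z₀)]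
        simpa using this
      have hG0 : G z₀ = 0 := by
        have : ‖G z₀‖ = 0 := by linarith [norm_nonneg (G z₀), norm_nonneg (F z₀)]
        simpa using this
      exact absurd (hdisj.ne_of_mem ⟨hF0, hz₀mem⟩ ⟨hG0, hz₀mem⟩) (by simp)
  set δ := min (c / 4) (1 / 2) with hδ
  have hδpos : 0 < δ := lt_min (by linarith) (by norm_num)
  have hδle : δ ≤ c / 4 := min_le_left _ _
  have hδle' : δ ≤ 1 / 2 := min_le_right _ _
  refine ⟨c / 4, by linarith, 1 - δ, by linarith, by linarith, ?_⟩
  intro ε hε z hr hr1 hprod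
  -- lower bound on ‖F z‖ + ‖G z‖
  have hzpos : 0 < ‖z‖ := by linarith
  set u : EuclideanSpace ℂ (Fin 2) := (‖z‖)⁻¹ • z with hu
  have hunorm : ‖u‖ = 1 := by
    rw [hu, norm_smul, norm_inv, norm_norm, inv_mul_cancel₀ hzpos.ne']
  have humem : u ∈ Metric.sphere (0 : EuclideanSpace ℂ (Fin 2)) 1 := by
    simpa using hunorm
  have hdist : ‖z - u‖ ≤ δ := by
    have : z - u = (1 - (‖z‖)⁻¹) • z := by
      rw [hu, sub_smul, one_smul]
    rw [this, norm_smul, Real.norm_eq_abs]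
    have hinv : 1 ≤ (‖z‖)⁻¹ := (one_le_inv₀ hzpos).mpr hr1
    have : |1 - (‖z‖)⁻¹| = (‖z‖)⁻¹ - 1 := by
      rw [abs_sub_comm, abs_of_nonneg (by linarith)]
    rw [this, sub_mul, inv_mul_cancel₀ hzpos.ne', one_mul]
    linarith
  have hlow : c / 2 ≤ ‖F z‖ + ‖G z‖ := by
    have h1 : ‖F u‖ - ‖F z‖ ≤ δ := by
      have := lip_aux' f₀ f₁ f₂ hf u z
      have h2 : ‖u - z‖ = ‖z - u‖ := norm_sub_rev u z
      have h3 := norm_sub_norm_le (F u) (F z)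
      have : ‖F u - F z‖ ≤ ‖z - u‖ := by rw [← h2]; exact this
      linarith [hdist]
    have h2 : ‖G u‖ - ‖G z‖ ≤ δ := by
      have := lip_aux' g₀ g₁ g₂ hg u z
      have h2' : ‖u - z‖ = ‖z - u‖ := norm_sub_rev u z
      have h3 := norm_sub_norm_le (G u) (G z)
      have : ‖G u - G z‖ ≤ ‖z - u‖ := by rw [← h2']; exact this
      linarith [hdist]
    have hmin := hz₀min humem
    have : c ≤ ‖F u‖ + ‖G u‖ := hmin
    linarith
  by_contra hcon
  push_neg at hcon
  obtain ⟨hFbig, hGbig⟩ := hcon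
  have hnormmul : ‖F z * G z‖ = ‖F z‖ * ‖G z‖ := norm_mul _ _
  rw [hnormmul] at hprod
  rcases le_total ‖F z‖ ‖G z‖ with h | h
  · -- ‖G z‖ ≥ c/4
    have hG4 : c / 4 ≤ ‖G z‖ := by linarith
    nlinarith [norm_nonneg (F z), norm_nonneg (G z)]
  · have hF4 : c / 4 ≤ ‖F z‖ := by linarith
    nlinarith [norm_nonneg (F z), norm_nonneg (G z)]
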